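/- arXiv:1110.4080 — 2 statements merged into one kernel-verified Lean document; each statement's English description precedes it below -/
import Mathlib

section
/- If I ⊆ R is a saturated strongly stable ideal that is not doubly saturated, then in any fixed degree d, among the monomials x^A of degree d−1 such that x^A·x_{n−1} is a minimal generator of I, the lexicographically largest one is contractible in I. -/
open MvPolynomial
open scoped Fin.NatCast

noncomputable section

/-- The polynomial ring `K[x_0,…,x_n]` in `n+1` variables. -/
abbrev PR (K : Type*) [Field K] (n : ℕ) := MvPolynomial (Fin (n+1)) K

variable {K : Type*} [Field K] {n : ℕ}

/-- The monomial `x^A`. -/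
def mon (A : Fin (n+1) →₀ ℕ) : PR K n := monomial A 1

/-- Total degree of the monomial with exponent vector `A`. -/
def mdeg (A : Fin (n+1) →₀ ℕ) : ℕ := ∑ i, A i

/-- The largest index of a variable dividing `x^A` (0 if `A = 0`). -/
def maxIdx (A : Fin (n+1) →₀ ℕ) : Fin (n+1) := WithBot.unbotD 0 (A.support.max)

/-- The exponent vector of `(x_i / x_j) · x^A`. -/
def shiftM (A : Fin (n+1) →₀ ℕ) (i j : Fin (n+1)) : Fin (n+1) →₀ ℕ :=
  A + Finsupp.single i 1 - Finsupp.single j 1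

/-- `I` is a monomial ideal: generated by a set of monomials. -/
def IsMonomialIdeal (I : Ideal (PR K n)) : Prop :=
  ∃ S : Set (Fin (n+1) →₀ ℕ), I = Ideal.span ((fun A => (mon A : PR K n)) '' S)

/-- Strongly stable monomial ideal. -/
def StronglyStable (I : Ideal (PR K n)) : Prop :=
  ∀ A : Fin (n+1) →₀ ℕ, mon A ∈ I → ∀ i j : Fin (n+1), A j ≠ 0 → i < j →
    mon (shiftM A i j) ∈ I

/-- Stable monomial ideal. -/
def Stable (I : Ideal (PR K n)) : Prop :=
  ∀ A : Fin (n+1) →₀ ℕ, A ≠ 0 → mon A ∈ I → ∀ i : Fin (n+1), i < maxIdx A →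
    mon (shiftM A i (maxIdx A)) ∈ I

/-- `x^A` is a minimal monomial generator of `I`. -/
def MinGen (I : Ideal (PR K n)) (A : Fin (n+1) →₀ ℕ) : Prop :=
  mon A ∈ I ∧ ∀ B : Fin (n+1) →₀ ℕ, B ≤ A → B ≠ A → mon B ∉ I

/-- The set of exponent vectors of minimal monomial generators of `I`. -/
def Gens (I : Ideal (PR K n)) : Set (Fin (n+1) →₀ ℕ) := {A | MinGen I A}

/-- The irrelevant maximal ideal `(x_0,…,x_n)`. -/
def irrIdeal (K : Type*) [Field K] (n : ℕ) : Ideal (PR K n) :=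
  Ideal.span (Set.range fun i : Fin (n+1) => (X i : PR K n))

/-- `I` is saturated: `(I : (x_0,…,x_n)) = I`. -/
def Saturated (I : Ideal (PR K n)) : Prop :=
  Submodule.colon I (irrIdeal K n) = I

/-- The saturation `∪ₖ (I : (x_0,…,x_n)^k)`. -/
def saturationOf (I : Ideal (PR K n)) : Ideal (PR K n) :=
  ⨆ k : ℕ, Submodule.colon I (((irrIdeal K n) ^ k : Ideal (PR K n)) : Set (PR K n))

/-- The Hilbert function of `R/I`: `j ↦ dim_K [R/I]_j`. -/
def hilbF {σ : Type*} (I : Ideal (MvPolynomial σ K)) (j : ℕ) : ℕ :=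
  Module.finrank K
    ((homogeneousSubmodule σ K j).map (Ideal.Quotient.mkₐ K I).toLinearMap)

/-- `p` is the Hilbert polynomial of `R/I`. -/
def IsHilbPoly {σ : Type*} (I : Ideal (MvPolynomial σ K)) (p : Polynomial ℚ) : Prop :=
  ∃ N : ℕ, ∀ j : ℕ, N ≤ j → p.eval (j : ℚ) = (hilbF I j : ℚ)

/-- The binomial-coefficient polynomial `C(q, k) = q(q-1)⋯(q-k+1)/k!`. -/
def choosePoly (q : Polynomial ℚ) (k : ℕ) : Polynomial ℚ :=
  ((k.factorial : ℚ))⁻¹ • ∏ j ∈ Finset.range k, (q - Polynomial.C (j : ℚ))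

/-- The canonical representation `p(z) = Σ_{i=0}^d [C(z+i,i+1) − C(z+i−b_i,i+1)]`. -/
def canonicalHP (d : ℕ) (b : ℕ → ℕ) : Polynomial ℚ :=
  ∑ i ∈ Finset.range (d+1),
    (choosePoly (Polynomial.X + Polynomial.C (i : ℚ)) (i+1)
      - choosePoly (Polynomial.X + Polynomial.C (i : ℚ) - Polynomial.C (b i : ℚ)) (i+1))

/-- `x^A >_lex x^B`. -/
def LexGt (A B : Fin (n+1) →₀ ℕ) : Prop :=
  ∃ i : Fin (n+1), (∀ j : Fin (n+1), j < i → A j = B j) ∧ B i < A i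

/-- `I` is a lexsegment ideal. -/
def IsLexsegment (I : Ideal (PR K n)) : Prop :=
  IsMonomialIdeal I ∧ ∀ A B : Fin (n+1) →₀ ℕ, mdeg A = mdeg B → mon B ∈ I →
    LexGt A B → mon A ∈ I

/-- `I` is a homogeneous ideal. -/
def Homog (I : Ideal (PR K n)) : Prop :=
  ∀ f ∈ I, ∀ j : ℕ, homogeneousComponent j f ∈ I

/-- The set of right-shifts of `x^A`. -/
def rightShifts (A : Fin (n+1) →₀ ℕ) : Set (Fin (n+1) →₀ ℕ) :=
  {B | ∃ i : Fin (n+1), (i : ℕ) + 2 ≤ n ∧ A i ≠ 0 ∧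
    B = shiftM A ((((i : ℕ) + 1 : ℕ)) : Fin (n+1)) i}

/-- The set of left-shifts of `x^A`. -/
def leftShifts (A : Fin (n+1) →₀ ℕ) : Set (Fin (n+1) →₀ ℕ) :=
  {B | ∃ i : Fin (n+1), 1 ≤ (i : ℕ) ∧ (i : ℕ) + 1 ≤ n ∧ A i ≠ 0 ∧
    B = shiftM A ((((i : ℕ) - 1 : ℕ)) : Fin (n+1)) i}

/-- The monomials `x^A x_r, …, x^A x_{n-1}` with `r = max(x^A)`. -/
def expSet (A : Fin (n+1) →₀ ℕ) : Set (Fin (n+1) →₀ ℕ) :=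
  {B | ∃ j : Fin (n+1), ((maxIdx A : ℕ)) ≤ (j : ℕ) ∧ (j : ℕ) + 1 ≤ n ∧
    B = A + Finsupp.single j 1}

/-- `x^A ≠ 1` is expandable in `I`. -/
def Expandable (I : Ideal (PR K n)) (A : Fin (n+1) →₀ ℕ) : Prop :=
  A ≠ 0 ∧ MinGen I A ∧ ∀ B ∈ rightShifts A, ¬ MinGen I B

/-- `x^A ≠ 1` is contractible in `I`. -/
def Contractible (I : Ideal (PR K n)) (A : Fin (n+1) →₀ ℕ) : Prop :=
  A ≠ 0 ∧ mon A ∉ I ∧ MinGen I (A + Finsupp.single (((n - 1 : ℕ)) : Fin (n+1)) 1) ∧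
    ∀ B ∈ leftShifts A, mon B ∈ I

/-- The expansion of `x^A` in `I`. -/
def expansionIdeal (I : Ideal (PR K n)) (A : Fin (n+1) →₀ ℕ) : Ideal (PR K n) :=
  Ideal.span ((fun B => (mon B : PR K n)) '' ((Gens I \ {A}) ∪ expSet A))

/-- The contraction of `x^A` in `I`. -/
def contractionIdeal (I : Ideal (PR K n)) (A : Fin (n+1) →₀ ℕ) : Ideal (PR K n) :=
  Ideal.span ((fun B => (mon B : PR K n)) '' ((Gens I ∪ {A}) \ expSet A))

/-- Setting `x_{n-1} = x_n = 1` in the exponent vector `A`. -/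
def stripLastTwo (A : Fin (n+1) →₀ ℕ) : Fin (n+1) →₀ ℕ :=
  Finsupp.update (Finsupp.update A (((n : ℕ)) : Fin (n+1)) 0) (((n - 1 : ℕ)) : Fin (n+1)) 0

/-- The double saturation `sat_{x_{n-1},x_n}(I)` (as an ideal of `R`). -/
def doubleSat (I : Ideal (PR K n)) : Ideal (PR K n) :=
  Ideal.span ((fun A => (mon (stripLastTwo A) : PR K n)) '' Gens I)

/-- Restriction of an exponent vector to the first `n` variables. -/
def restrictExp (A : Fin (n+1) →₀ ℕ) : Fin n →₀ ℕ :=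
  Finsupp.comapDomain Fin.castSucc A (Fin.castSucc_injective n).injOn

/-- The ideal `I · R^{(1)}` in `K[x_0,…,x_{n-1}]` (for saturated monomial `I`). -/
def restrictIdeal (I : Ideal (PR K n)) : Ideal (MvPolynomial (Fin n) K) :=
  Ideal.span ((fun A => (monomial (restrictExp A) (1 : K) : MvPolynomial (Fin n) K)) '' Gens I)

/-- Lex order on exponent vectors in `n` variables. -/
def LexGt' (A B : Fin n →₀ ℕ) : Prop :=
  ∃ i : Fin n, (∀ j : Fin n, j < i → A j = B j) ∧ B i < A i

/-- Monomial ideal in `K[x_0,…,x_{n-1}]`. -/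
def IsMonomialIdeal' (I : Ideal (MvPolynomial (Fin n) K)) : Prop :=
  ∃ S : Set (Fin n →₀ ℕ),
    I = Ideal.span ((fun A => (monomial A (1 : K) : MvPolynomial (Fin n) K)) '' S)

/-- Lexsegment ideal in `K[x_0,…,x_{n-1}]`. -/
def IsLexsegment' (I : Ideal (MvPolynomial (Fin n) K)) : Prop :=
  IsMonomialIdeal' I ∧ ∀ A B : Fin n →₀ ℕ, (∑ i, A i) = (∑ i, B i) →
    monomial B (1 : K) ∈ I → LexGt' A B → monomial A (1 : K) ∈ I

/-- `I` is almost lexsegment: saturated strongly stable with `I·R^{(1)}` lexsegment. -/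
def AlmostLex (I : Ideal (PR K n)) : Prop :=
  IsMonomialIdeal I ∧ StronglyStable I ∧ Saturated I ∧ IsLexsegment' (restrictIdeal I)

/-- A graded free resolution of the ideal `I`, with `rank i` the rank of the `i`-th
free module and `twist i k` the degrees of the standard basis elements. -/
structure GradedFreeRes (I : Ideal (PR K n)) where
  rank : ℕ → ℕ
  twist : (i : ℕ) → Fin (rank i) → ℕ
  diff : (i : ℕ) → ((Fin (rank (i+1)) → PR K n) →ₗ[PR K n] (Fin (rank i) → PR K n))
  aug : (Fin (rank 0) → PR K n) →ₗ[PR K n] PR K n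
  aug_range : LinearMap.range aug = I
  aug_graded : ∀ k, aug (Pi.single k 1) ∈ homogeneousSubmodule (Fin (n+1)) K (twist 0 k)
  diff_graded : ∀ i k l, diff i (Pi.single k 1) l = 0 ∨
    (twist i l ≤ twist (i+1) k ∧
      diff i (Pi.single k 1) l ∈ homogeneousSubmodule (Fin (n+1)) K (twist (i+1) k - twist i l))
  exact_aug : LinearMap.range (diff 0) = LinearMap.ker aug
  exact_diff : ∀ i, LinearMap.range (diff (i+1)) = LinearMap.ker (diff i)

/-- A resolution is minimal if all differential entries lie in the irrelevant ideal. -/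
def MinimalRes {I : Ideal (PR K n)} (F : GradedFreeRes I) : Prop :=
  ∀ i k l, constantCoeff (F.diff i (Pi.single k 1) l) = 0

end

section Aux

variable {K : Type*} [Field K] {n : ℕ}

lemma aux_mon_mul_mem (I : Ideal (PR K n)) {C D : Fin (n+1) →₀ ℕ}
    (h : mon C ∈ I) (hle : C ≤ D) : (mon D : PR K n) ∈ I := by
  have hDeq : (mon D : PR K n) = mon (D - C) * mon C := by
    rw [mon, mon, mon, monomial_mul, one_mul, tsub_add_cancel_of_le hle]
  rw [hDeq]
  exact Ideal.mul_mem_left _ _ h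

lemma aux_mdeg_lt {B D : Fin (n+1) →₀ ℕ} (hle : B ≤ D) (hne : B ≠ D) :
    mdeg B < mdeg D := by
  rw [Finsupp.le_def] at hle
  obtain ⟨i, hi⟩ : ∃ i, B i ≠ D i := by
    by_contra hc
    push_neg at hc
    exact hne (Finsupp.ext hc)
  exact Finset.sum_lt_sum (fun j _ => hle j) ⟨i, Finset.mem_univ i, lt_of_le_of_ne (hle i) hi⟩

lemma aux_exists_minGen_aux (I : Ideal (PR K n)) :
    ∀ d (D : Fin (n+1) →₀ ℕ), mdeg D ≤ d → mon D ∈ I → ∃ C, C ≤ D ∧ MinGen I C := by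
  intro d
  induction d with
  | zero =>
    intro D hD hI
    exact ⟨D, le_rfl, hI, fun B hle hne _ => absurd (aux_mdeg_lt hle hne) (by omega)⟩
  | succ d ih =>
    intro D hD hI
    by_cases h : MinGen I D
    · exact ⟨D, le_rfl, h⟩
    · unfold MinGen at h
      push_neg at h
      obtain ⟨B, hBle, hBne, hBI⟩ := h hI
      have hlt : mdeg B < mdeg D := aux_mdeg_lt hBle hBne
      obtain ⟨C, hCle, hC⟩ := ih B (by omega) hBI
      exact ⟨C, hCle.trans hBle, hC⟩

lemma aux_exists_minGen (I : Ideal (PR K n)) {D : Fin (n+1) →₀ ℕ} (h : mon D ∈ I) :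
    ∃ C, C ≤ D ∧ MinGen I C :=
  aux_exists_minGen_aux I (mdeg D) D le_rfl h

lemma aux_lexgt_asymm {A B : Fin (n+1) →₀ ℕ} (h1 : LexGt A B) (h2 : LexGt B A) : False := by
  obtain ⟨p, hp, hpl⟩ := h1
  obtain ⟨q, hq, hql⟩ := h2
  rcases lt_trichotomy p q with h | h | h
  · exact absurd (hq p h).symm (by omega)
  · subst h; omega
  · exact absurd (hp q h).symm (by omega)

lemma aux_mdeg_add (A B : Fin (n+1) →₀ ℕ) : mdeg (A + B) = mdeg A + mdeg B := by
  simp [mdeg, Finsupp.add_apply, Finset.sum_add_distrib]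

lemma aux_mdeg_single (j : Fin (n+1)) : mdeg (Finsupp.single j 1) = 1 := by
  simp [mdeg, Finsupp.single_apply]

lemma aux_sat_strip (I : Ideal (PR K n)) (hss : StronglyStable I) (hsat : Saturated I)
    {D : Fin (n+1) →₀ ℕ} (hD : mon D ∈ I) (hDn : D (((n : ℕ)) : Fin (n+1)) ≠ 0) :
    (mon (D - Finsupp.single (((n : ℕ)) : Fin (n+1)) 1) : PR K n) ∈ I := by
  set lam : Fin (n+1) := (((n : ℕ)) : Fin (n+1)) with hlam
  have hlamv : (lam : ℕ) = n := Fin.val_cast_of_lt (by omega)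
  have hle : Finsupp.single lam 1 ≤ D := Finsupp.single_le_iff.mpr (by omega)
  set D' := D - Finsupp.single lam 1 with hD'
  have hDeq : D' + Finsupp.single lam 1 = D := tsub_add_cancel_of_le hle
  have hallj : ∀ j : Fin (n+1), (mon (D' + Finsupp.single j 1) : PR K n) ∈ I := by
    intro j
    by_cases hj : j = lam
    · subst hj; rw [hDeq]; exact hD
    · have hjlt : j < lam := by
        rw [Fin.lt_def, hlamv]
        have : (j : ℕ) ≤ n := Nat.le_of_lt_succ j.isLt
        have : (j : ℕ) ≠ n := fun hc => hj (Fin.ext (by rw [hlamv, hc]))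
        omega
      have h := hss D hD j lam hDn hjlt
      have hexp : shiftM D j lam = D' + Finsupp.single j 1 := by
        rw [shiftM, ← hDeq]
        have : D' + Finsupp.single lam 1 + Finsupp.single j 1
            = D' + Finsupp.single j 1 + Finsupp.single lam 1 := by abel
        rw [this, add_tsub_cancel_right]
      rwa [hexp] at h
  have hcolon : (mon D' : PR K n) ∈ Submodule.colon I (irrIdeal K n) := by
    rw [Submodule.mem_colon]
    intro p hp
    induction hp using Submodule.span_induction with
    | mem x hx =>
      obtain ⟨j, rfl⟩ := hx
      have : (mon D' : PR K n) • (X j : PR K n) = mon (D' + Finsupp.single j 1) := by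
        rw [smul_eq_mul, mon, mon, ← pow_one (X j : PR K n), ← monomial_add_single]
      rw [this]
      exact hallj j
    | zero => simpa using I.zero_mem
    | add x y hx hy ihx ihy => rw [smul_add]; exact I.add_mem ihx ihy
    | smul a x hx ihx =>
      rw [smul_comm]
      exact Ideal.mul_mem_left _ _ ihx
  rw [Saturated] at hsat
  rw [← hsat]
  exact hcolon

end Aux

/-- if a saturated strongly stable ideal is not doubly saturated, then in
each degree the lexicographically largest monomial `x^A` with `x^A x_{n-1} ∈ G(I)`
is contractible. -/
theorem lex_largest_contractible
    {K : Type*} [Field K] {n : ℕ} (hn : 2 ≤ n) (I : Ideal (PR K n))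
    (hmono : IsMonomialIdeal I) (hss : StronglyStable I) (hsat : Saturated I)
    (hnds : doubleSat I ≠ I)
    (A : Fin (n+1) →₀ ℕ) (hA0 : A ≠ 0)
    (hA : MinGen I (A + Finsupp.single (((n - 1 : ℕ)) : Fin (n+1)) 1))
    (hmax : ∀ B : Fin (n+1) →₀ ℕ, mdeg B = mdeg A →
      MinGen I (B + Finsupp.single (((n - 1 : ℕ)) : Fin (n+1)) 1) → B ≠ A → LexGt A B) :
    Contractible I A := by
  have hνv : ((((n - 1 : ℕ)) : Fin (n+1)) : ℕ) = n - 1 := Fin.val_cast_of_lt (by omega)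
  have hlamv : ((((n : ℕ)) : Fin (n+1)) : ℕ) = n := Fin.val_cast_of_lt (by omega)
  set ν : Fin (n+1) := (((n - 1 : ℕ)) : Fin (n+1)) with hν
  set lam : Fin (n+1) := (((n : ℕ)) : Fin (n+1)) with hlam
  have hνlam : ν ≠ lam := by
    intro h
    have := congrArg Fin.val h
    rw [hνv, hlamv] at this
    omega
  -- A has no x_n
  have hAlam : A lam = 0 := by
    by_contra hAn
    have h1 : (A + Finsupp.single ν 1 : Fin (n+1) →₀ ℕ) lam ≠ 0 := by
      rw [Finsupp.add_apply, Finsupp.single_eq_of_ne' hνlam]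
      omega
    have h2 := aux_sat_strip I hss hsat hA.1 h1
    refine hA.2 _ tsub_le_self ?_ h2
    intro h
    have h3 := DFunLike.congr_fun h lam
    rw [← hlam] at h3
    rw [Finsupp.tsub_apply, Finsupp.add_apply,
      Finsupp.single_eq_of_ne' hνlam, Finsupp.single_eq_same] at h3
    omega
  refine ⟨hA0, ?_, hA, ?_⟩
  · -- mon A ∉ I
    intro hmem
    refine hA.2 A (le_add_right le_rfl) ?_ hmem
    intro h
    have h2 := DFunLike.congr_fun h ν
    rw [Finsupp.add_apply, Finsupp.single_eq_same] at h2
    omega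
  · -- left shifts
    intro B hB
    obtain ⟨i, hi1, hin, hAi, hBdef⟩ := hB
    set i' : Fin (n+1) := ((((i : ℕ) - 1 : ℕ)) : Fin (n+1)) with hi'
    have hi'v : (i' : ℕ) = (i : ℕ) - 1 := Fin.val_cast_of_lt (by omega)
    have hii' : i' ≠ i := by
      intro h
      have := congrArg Fin.val h
      rw [hi'v] at this
      omega
    have hi'lt : i' < i := by rw [Fin.lt_def, hi'v]; omega
    have hi'lam : i' ≠ lam := by
      intro h
      have := congrArg Fin.val h
      rw [hi'v, hlamv] at this
      omega
    by_contra hBnotI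
    have hsle : Finsupp.single i 1 ≤ A := Finsupp.single_le_iff.mpr (by omega)
    set A' := A - Finsupp.single i 1 with hA'
    have hAeq : A' + Finsupp.single i 1 = A := tsub_add_cancel_of_le hsle
    have hBeq : B = A' + Finsupp.single i' 1 := by
      rw [hBdef, shiftM, ← hAeq]
      have : A' + Finsupp.single i 1 + Finsupp.single i' 1
          = A' + Finsupp.single i' 1 + Finsupp.single i 1 := by abel
      rw [this, add_tsub_cancel_right]
    have hBν : (mon (B + Finsupp.single ν 1) : PR K n) ∈ I := by
      have hAνi : (A + Finsupp.single ν 1 : Fin (n+1) →₀ ℕ) i ≠ 0 := by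
        rw [Finsupp.add_apply]
        omega
      have h := hss _ hA.1 i' i hAνi hi'lt
      have hexp : shiftM (A + Finsupp.single ν 1) i' i = B + Finsupp.single ν 1 := by
        rw [shiftM, hBeq, ← hAeq]
        have : A' + Finsupp.single i 1 + Finsupp.single ν 1 + Finsupp.single i' 1
            = A' + Finsupp.single i' 1 + Finsupp.single ν 1 + Finsupp.single i 1 := by abel
        rw [this, add_tsub_cancel_right]
      rwa [hexp] at h
    obtain ⟨m, hmle, hm⟩ := aux_exists_minGen I hBν
    rw [Finsupp.le_def] at hmle
    have hmν : m ν = B ν + 1 := by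
      by_contra hc
      have hmB : m ≤ B := by
        rw [Finsupp.le_def]
        intro j
        have hmlej := hmle j
        by_cases hj : j = ν
        · rw [hj] at hmlej ⊢
          rw [Finsupp.add_apply, Finsupp.single_eq_same] at hmlej
          omega
        · rw [Finsupp.add_apply, Finsupp.single_eq_of_ne' (fun h => hj h.symm)] at hmlej
          omega
      exact hBnotI (aux_mon_mul_mem I hm.1 hmB)
    have hmsle : Finsupp.single ν 1 ≤ m := Finsupp.single_le_iff.mpr (by omega)
    set m' := m - Finsupp.single ν 1 with hm'def
    have hmeq : m' + Finsupp.single ν 1 = m := tsub_add_cancel_of_le hmsle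
    have hm'ν : m' ν = B ν := by
      rw [hm'def, Finsupp.tsub_apply, Finsupp.single_eq_same]
      omega
    have hub : ∀ j : Fin (n+1), m' j ≤ B j := by
      intro j
      by_cases hj : j = ν
      · rw [hj, hm'ν]
      · have h1 := hmle j
        rw [Finsupp.add_apply, Finsupp.single_eq_of_ne' (fun h => hj h.symm)] at h1
        rw [hm'def, Finsupp.tsub_apply, Finsupp.single_eq_of_ne' (fun h => hj h.symm)]
        omega
    have hBlam : B lam = 0 := by
      rw [hBeq, Finsupp.add_apply, Finsupp.single_eq_of_ne' hi'lam, hA',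
        Finsupp.tsub_apply, hAlam]
      simp
    have hm'B : m' = B := by
      ext k
      by_cases hkν : k = ν
      · rw [hkν, hm'ν]
      by_cases hklam : k = lam
      · have h1 := hub k
        have h2 : B k = 0 := by rw [hklam]; exact hBlam
        omega
      refine le_antisymm (hub k) ?_
      by_contra hck
      push_neg at hck
      have hklt : k < ν := by
        rw [Fin.lt_def, hνv]
        have h1 : (k : ℕ) ≤ n := Nat.le_of_lt_succ k.isLt
        have h2 : (k : ℕ) ≠ n := fun hc => hklam (Fin.ext (by rw [hlamv, hc]))
        have h3 : (k : ℕ) ≠ n - 1 := fun hc => hkν (Fin.ext (by rw [hνv, hc]))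
        omega
      have hmem := hss m hm.1 k ν (by omega) hklt
      have hexp : shiftM m k ν = m' + Finsupp.single k 1 := by
        rw [shiftM, ← hmeq]
        have : m' + Finsupp.single ν 1 + Finsupp.single k 1
            = m' + Finsupp.single k 1 + Finsupp.single ν 1 := by abel
        rw [this, add_tsub_cancel_right]
      rw [hexp] at hmem
      have hsub : m' + Finsupp.single k 1 ≤ B := by
        rw [Finsupp.le_def]
        intro j
        rw [Finsupp.add_apply]
        by_cases hj : k = j
        · rw [← hj, Finsupp.single_eq_same]
          have := hub k
          omega
        · rw [Finsupp.single_eq_of_ne' hj]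
          have := hub j
          omega
      exact hBnotI (aux_mon_mul_mem I hmem hsub)
    rw [← hmeq, hm'B] at hm
    have hdeg : mdeg B = mdeg A := by
      rw [hBeq, ← hAeq, aux_mdeg_add, aux_mdeg_add, aux_mdeg_single, aux_mdeg_single]
    have hBi' : B i' = A i' + 1 := by
      rw [hBeq, Finsupp.add_apply, Finsupp.single_eq_same, ← hAeq,
        Finsupp.add_apply, Finsupp.single_eq_of_ne' (Ne.symm hii')]
      omega
    have hne : B ≠ A := by
      intro h
      rw [h] at hBi'
      omega
    have hgt := hmax B hdeg hm hne
    have hgt' : LexGt B A := by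
      refine ⟨i', ?_, by omega⟩
      intro j hj
      have hji' : i' ≠ j := fun h => absurd h.symm (ne_of_lt hj)
      have hji : i ≠ j := by
        intro h
        rw [Fin.lt_def, hi'v, ← h] at hj
        omega
      rw [hBeq, ← hAeq, Finsupp.add_apply, Finsupp.add_apply,
        Finsupp.single_eq_of_ne' hji', Finsupp.single_eq_of_ne' hji]
    exact aux_lexgt_asymm hgt hgt'
end

section
/- Let I^exp be the expansion of the monomial x^A in a saturated strongly stable ideal I ⊆ R. Then the Hilbert function satisfies h_{R/I^exp}(j) = h_{R/I}(j) for j < deg(x^A) and h_{R/I^exp}(j) = h_{R/I}(j) + 1 for j ≥ deg(x^A). -/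
open MvPolynomial
open Fin.NatCast

noncomputable section
variable {K : Type*} [Field K] {n : ℕ}

theorem mon_mul (B C : Fin (n+1) →₀ ℕ) : (mon B : PR K n) * mon C = mon (B + C) := by
  simp [mon, monomial_mul]

theorem mon_mem_of_le {J : Ideal (PR K n)} {C B : Fin (n+1) →₀ ℕ} (h : C ≤ B)
    (hC : (mon C : PR K n) ∈ J) : (mon B : PR K n) ∈ J := by
  have : (mon (B - C) : PR K n) * mon C ∈ J := Ideal.mul_mem_left _ _ hC
  rwa [mon_mul, tsub_add_cancel_of_le h] at this

theorem coeff_mon (B C : Fin (n+1) →₀ ℕ) : coeff C (mon B : PR K n) = if B = C then 1 else 0 :=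
  coeff_monomial _ _ _

theorem mon_homog (B : Fin (n+1) →₀ ℕ) {j : ℕ} (h : mdeg B = j) :
    (mon B : PR K n) ∈ homogeneousSubmodule (Fin (n+1)) K j := by
  rw [mem_homogeneousSubmodule]
  apply isHomogeneous_monomial
  have hd : B.degree = mdeg B := Finset.sum_subset (Finset.subset_univ _)
    (fun x _ hx => Finsupp.notMem_support_iff.mp hx)
  rw [hd, h]

open Classical in
def TT (J : Ideal (PR K n)) (j : ℕ) : Finset (Fin (n+1) →₀ ℕ) :=
  (Finset.Iic (Finsupp.equivFunOnFinite.symm (fun _ => j))).filter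
    (fun B => mdeg B = j ∧ (mon B : PR K n) ∉ J)

theorem mem_TT {J : Ideal (PR K n)} {j : ℕ} {B : Fin (n+1) →₀ ℕ} :
    B ∈ TT J j ↔ mdeg B = j ∧ (mon B : PR K n) ∉ J := by
  classical
  rw [TT, Finset.mem_filter]
  simp only [Finset.mem_Iic, and_iff_right_iff_imp]
  rintro ⟨hd, -⟩
  intro i
  have : B i ≤ mdeg B := Finset.single_le_sum (fun i _ => Nat.zero_le _) (Finset.mem_univ i)
  simpa using this.trans hd.le

theorem hilbF_eq_card (J : Ideal (PR K n))
    (hJ : ∀ f ∈ J, ∀ B ∈ f.support, (mon B : PR K n) ∈ J) (j : ℕ) :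
    hilbF J j = (TT J j).card := by
  classical
  set q := (Ideal.Quotient.mkₐ K J).toLinearMap with hqdef
  set w : (Fin (n+1) →₀ ℕ) → (PR K n ⧸ J) := fun B => Ideal.Quotient.mk J (mon B) with hwdef
  have hqmk : ∀ p : PR K n, q p = Ideal.Quotient.mk J p := fun p => rfl
  have hw0 : ∀ B, (mon B : PR K n) ∈ J → w B = 0 := fun B hB =>
    (Ideal.Quotient.eq_zero_iff_mem).mpr hB
  have hind : LinearIndependent K (fun b : ↥(TT J j) => w b.1) := by
    rw [Fintype.linearIndependent_iff]
    intro g hg i0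
    set f : PR K n := ∑ i : ↥(TT J j), g i • mon i.1 with hfdef
    have hfJ : f ∈ J := by
      rw [← Ideal.Quotient.eq_zero_iff_mem, ← hqmk, hfdef, map_sum]
      simp only [map_smul]
      exact hg
    by_contra hgi
    have hco : coeff i0.1 f = g i0 := by
      rw [hfdef, coeff_sum]
      have h1 : ∀ i : ↥(TT J j),
          coeff i0.1 (g i • (mon i.1 : PR K n)) = if i = i0 then g i else 0 := by
        intro i
        rw [coeff_smul, coeff_mon]
        by_cases h : i = i0
        · simp [h]
        · have : ¬ (i.1 = i0.1) := fun he => h (Subtype.ext he)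
          simp [h, this]
      rw [Finset.sum_congr rfl (fun i _ => h1 i), Finset.sum_ite_eq' Finset.univ i0]
      simp
    have hsup : i0.1 ∈ f.support := by
      rw [mem_support_iff, hco]; exact hgi
    exact (mem_TT.mp i0.2).2 (hJ f hfJ _ hsup)
  have hspan : (homogeneousSubmodule (Fin (n+1)) K j).map q
      = Submodule.span K (Set.range (fun b : ↥(TT J j) => w b.1)) := by
    apply le_antisymm
    · rintro y ⟨f, hf, rfl⟩
      have hrepr : q f = ∑ B ∈ f.support, coeff B f • w B := by
        conv_lhs => rw [← f.support_sum_monomial_coeff]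
        rw [map_sum]
        refine Finset.sum_congr rfl (fun B _ => ?_)
        have h2 : monomial B (coeff B f) = coeff B f • (mon B : PR K n) := by
          rw [mon, smul_monomial, smul_eq_mul, mul_one]
        rw [h2, map_smul, hqmk]
      rw [hrepr]
      apply Submodule.sum_mem
      intro B hB
      by_cases hBJ : (mon B : PR K n) ∈ J
      · rw [hw0 B hBJ, smul_zero]; exact Submodule.zero_mem _
      · refine Submodule.smul_mem _ _ (Submodule.subset_span ?_)
        have hBd : mdeg B = j := by
          have := (mem_homogeneousSubmodule j f).mp hf (mem_support_iff.mp hB)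
          rw [← this, mdeg]
          simp [Finsupp.weight, Finsupp.linearCombination, Finsupp.sum]
          exact (Finset.sum_subset (Finset.subset_univ _)
            (fun x _ hx => Finsupp.notMem_support_iff.mp hx)).symm
        exact ⟨⟨B, mem_TT.mpr ⟨hBd, hBJ⟩⟩, rfl⟩
    · rw [Submodule.span_le]
      rintro y ⟨b, rfl⟩
      exact ⟨mon b.1, mon_homog b.1 (mem_TT.mp b.2).1, rfl⟩
  rw [hilbF, hspan, finrank_span_eq_card hind, Fintype.card_coe]

theorem mdeg_lt_of_lt {B' B : Fin (n+1) →₀ ℕ} (h : B' ≤ B) (hne : B' ≠ B) :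
    mdeg B' < mdeg B := by
  obtain ⟨i, hi⟩ : ∃ i, B' i ≠ B i := by
    by_contra hc; push_neg at hc; exact hne (Finsupp.ext hc)
  exact Finset.sum_lt_sum (fun i _ => Finsupp.le_def.mp h i)
    ⟨i, Finset.mem_univ i, lt_of_le_of_ne (Finsupp.le_def.mp h i) hi⟩

theorem exists_minGen_aux (I : Ideal (PR K n)) :
    ∀ d : ℕ, ∀ B : Fin (n+1) →₀ ℕ, mdeg B ≤ d → (mon B : PR K n) ∈ I →
      ∃ C, C ≤ B ∧ MinGen I C := by
  intro d
  induction d using Nat.strong_induction_on with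
  | _ d ih =>
    intro B hBd hBI
    by_cases h : MinGen I B
    · exact ⟨B, le_refl _, h⟩
    · rw [MinGen] at h
      push_neg at h
      obtain ⟨B', h1, h2, h3⟩ := h hBI
      have hlt : mdeg B' < mdeg B := mdeg_lt_of_lt h1 h2
      obtain ⟨C, hC1, hC2⟩ := ih (mdeg B') (lt_of_lt_of_le hlt hBd) B' (le_refl _) h3
      exact ⟨C, hC1.trans h1, hC2⟩

theorem exists_minGen {I : Ideal (PR K n)} {B : Fin (n+1) →₀ ℕ}
    (hB : (mon B : PR K n) ∈ I) : ∃ C, C ≤ B ∧ MinGen I C :=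
  exists_minGen_aux I (mdeg B) B (le_refl _) hB

theorem mon_mem_span_iff {S : Set (Fin (n+1) →₀ ℕ)} {B : Fin (n+1) →₀ ℕ} :
    (mon B : PR K n) ∈ Ideal.span ((fun A => (mon A : PR K n)) '' S) ↔ ∃ s ∈ S, s ≤ B := by
  classical
  have himg : (fun A => (mon A : PR K n)) '' S = (fun s => monomial s (1:K)) '' S := rfl
  rw [himg, mem_ideal_span_monomial_image]
  constructor
  · intro h
    refine h B ?_
    simp [mon, support_monomial]
  · rintro ⟨s, hs, hle⟩ B' hB'
    have : B' = B := by
      have hsup : (mon B : PR K n).support = {B} := by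
        rw [mon, support_monomial]; simp
      rw [hsup, Finset.mem_singleton] at hB'
      exact hB'
    exact ⟨s, hs, this ▸ hle⟩

theorem monIdeal_support {J : Ideal (PR K n)} (h : IsMonomialIdeal J) :
    ∀ f ∈ J, ∀ B ∈ f.support, (mon B : PR K n) ∈ J := by
  obtain ⟨S, rfl⟩ := h
  intro f hf B hB
  have himg : (fun A => (mon A : PR K n)) '' S = (fun s => monomial s (1:K)) '' S := rfl
  rw [himg, mem_ideal_span_monomial_image] at hf
  obtain ⟨s, hs, hle⟩ := hf B hB
  exact mon_mem_of_le hle (Ideal.subset_span ⟨s, hs, rfl⟩)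

theorem minGen_last_eq_zero {I : Ideal (PR K n)} (hss : StronglyStable I)
    (hsat : Saturated I) {C : Fin (n+1) →₀ ℕ} (hC : MinGen I C) : C (Fin.last n) = 0 := by
  by_contra h
  have hle1 : Finsupp.single (Fin.last n) 1 ≤ C :=
    Finsupp.single_le_iff.mpr (Nat.one_le_iff_ne_zero.mpr h)
  set D := C - Finsupp.single (Fin.last n) 1 with hD
  have key : ∀ i : Fin (n+1), (mon (D + Finsupp.single i 1) : PR K n) ∈ I := by
    intro i
    rcases eq_or_ne i (Fin.last n) with rfl | hi
    · rw [hD, tsub_add_cancel_of_le hle1]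
      exact hC.1
    · have hilt : i < Fin.last n := lt_of_le_of_ne (Fin.le_last i) hi
      have := hss C hC.1 i (Fin.last n) h hilt
      have heq : shiftM C i (Fin.last n) = D + Finsupp.single i 1 := by
        ext a
        simp only [shiftM, hD, Finsupp.tsub_apply, Finsupp.add_apply, Finsupp.single_apply]
        rcases eq_or_ne i a with h1 | h1 <;> rcases eq_or_ne (Fin.last n) a with h2 | h2
        · exact absurd (h1.trans h2.symm) hi
        · simp [h1, h2]
        · simp [h1, h2]
        · simp [h1, h2]
      rwa [heq] at this
  have hcolon : (mon D : PR K n) ∈ Submodule.colon I (irrIdeal K n) := by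
    rw [Submodule.mem_colon]
    intro p hp
    rw [irrIdeal] at hp
    refine Submodule.span_induction ?_ ?_ ?_ ?_ hp
    · rintro x ⟨i, rfl⟩
      show mon D * X i ∈ I
      have hX : (X i : PR K n) = mon (Finsupp.single i 1) := rfl
      rw [hX, mon_mul]
      exact key i
    · simp
    · intro x y _ _ hx hy
      rw [smul_add]; exact Ideal.add_mem _ hx hy
    · intro r x _ hx
      rw [smul_comm]
      exact Ideal.mul_mem_left _ _ hx
  rw [hsat] at hcolon
  have hne : D ≠ C := by
    intro he
    have : D (Fin.last n) = C (Fin.last n) := by rw [he]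
    rw [hD] at this
    simp [Finsupp.tsub_apply, Finsupp.single_apply] at this
    omega
  exact hC.2 D tsub_le_self hne hcolon

theorem maxIdx_apply_ne_zero {A : Fin (n+1) →₀ ℕ} (hA : A ≠ 0) : A (maxIdx A) ≠ 0 := by
  have hs : A.support.Nonempty := Finsupp.support_nonempty_iff.mpr hA
  obtain ⟨m, hm⟩ := Finset.max_of_nonempty hs
  have : maxIdx A = m := by rw [maxIdx, hm]; rfl
  rw [this]
  exact Finsupp.mem_support_iff.mp (Finset.mem_of_max hm)

theorem expansion_le {I : Ideal (PR K n)} {A : Fin (n+1) →₀ ℕ}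
    (hAI : (mon A : PR K n) ∈ I) : expansionIdeal I A ≤ I := by
  rw [expansionIdeal, Ideal.span_le]
  rintro x ⟨s, hs, rfl⟩
  rcases hs with ⟨hsG, -⟩ | ⟨j', -, -, rfl⟩
  · exact hsG.1
  · exact mon_mem_of_le (Finsupp.le_def.mpr fun a => by
      simp only [Finsupp.add_apply]; exact Nat.le_add_right _ _) hAI

theorem key_b {I : Ideal (PR K n)} (hss : StronglyStable I) (hsat : Saturated I)
    {A : Fin (n+1) →₀ ℕ} (hAmin : MinGen I A) (k : ℕ) :
    (mon (A + Finsupp.single (Fin.last n) k) : PR K n) ∉ expansionIdeal I A := by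
  intro hmem
  rw [expansionIdeal, mon_mem_span_iff] at hmem
  obtain ⟨s, hs, hle⟩ := hmem
  rcases hs with ⟨hsG, hsA⟩ | ⟨j', hj1, hj2, rfl⟩
  · have hslast : s (Fin.last n) = 0 := minGen_last_eq_zero hss hsat hsG
    have hsleA : s ≤ A := by
      refine Finsupp.le_def.mpr fun a => ?_
      rcases eq_or_ne a (Fin.last n) with rfl | ha
      · rw [hslast]; exact Nat.zero_le _
      · have := Finsupp.le_def.mp hle a
        simpa [Finsupp.add_apply, Finsupp.single_apply, (Ne.symm ha)] using this
    have hne : s ≠ A := by simpa using hsA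
    exact hAmin.2 s hsleA hne hsG.1
  · have hlast : j' ≠ Fin.last n := by
      intro he
      rw [he, Fin.val_last] at hj2
      omega
    have h2' := Finsupp.le_def.mp hle j'
    have h3' : (A j' + 1 : ℕ) ≤ A j' := by
      simpa [Finsupp.add_apply, Finsupp.single_apply,
        if_neg (fun hc : Fin.last n = j' => hlast hc.symm)] using h2'
    omega

theorem key_c {I : Ideal (PR K n)} (hss : StronglyStable I) (hsat : Saturated I)
    {A : Fin (n+1) →₀ ℕ} (hA0 : A ≠ 0) (hAmin : MinGen I A) {B : Fin (n+1) →₀ ℕ}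
    (hBI : (mon B : PR K n) ∈ I)
    (hB : ∀ k : ℕ, B ≠ A + Finsupp.single (Fin.last n) k) :
    (mon B : PR K n) ∈ expansionIdeal I A := by
  obtain ⟨C, hCle, hCmin⟩ := exists_minGen hBI
  rw [expansionIdeal, mon_mem_span_iff]
  rcases eq_or_ne C A with heq | hCA
  · -- C = A
    have hAB : A ≤ B := heq ▸ hCle
    set r := maxIdx A with hrdef
    have hr : A r ≠ 0 := maxIdx_apply_ne_zero hA0
    have hAlast : A (Fin.last n) = 0 := minGen_last_eq_zero hss hsat hAmin
    by_cases hcase1 : ∃ j' : Fin (n+1), (r : ℕ) ≤ (j' : ℕ) ∧ (j' : ℕ) + 1 ≤ n ∧ A j' < B j'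
    · obtain ⟨j', h1, h2, h3⟩ := hcase1
      refine ⟨A + Finsupp.single j' 1, Or.inr ⟨j', h1, h2, rfl⟩, Finsupp.le_def.mpr fun a => ?_⟩
      rcases eq_or_ne a j' with rfl | ha
      · simpa [Finsupp.add_apply, Finsupp.single_apply] using h3
      · simpa [Finsupp.add_apply, Finsupp.single_apply, (Ne.symm ha)] using Finsupp.le_def.mp hAB a
    · by_cases hcase2 : ∃ i : Fin (n+1), i < r ∧ A i < B i
      · obtain ⟨i, hi1, hi2⟩ := hcase2
        have hir : i ≠ r := ne_of_lt hi1
        have hD : (mon (shiftM A i r) : PR K n) ∈ I := hss A hAmin.1 i r hr hi1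
        have hDle : shiftM A i r ≤ B := by
          rw [Finsupp.le_def]
          intro a
          have hBa := Finsupp.le_def.mp hAB a
          simp only [shiftM, Finsupp.tsub_apply, Finsupp.add_apply, Finsupp.single_apply]
          by_cases h1 : i = a <;> by_cases h2 : r = a
          · exact absurd (h1.trans h2.symm) hir
          · rw [h1] at hi2
            simp [h1, h2] <;> omega
          · simp [h1, h2] <;> omega
          · simp [h1, h2] <;> omega
        obtain ⟨C', hC'le, hC'min⟩ := exists_minGen hD
        have hC'A : C' ≠ A := by
          intro he
          have h5 := Finsupp.le_def.mp (he ▸ hC'le) r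
          have h6 : (shiftM A i r) r = A r - 1 := by
            simp [shiftM, Finsupp.tsub_apply, Finsupp.add_apply, Finsupp.single_apply, hir]
          rw [h6] at h5
          omega
        exact ⟨C', Or.inl ⟨hC'min, by simpa using hC'A⟩, hC'le.trans hDle⟩
      · exfalso
        push_neg at hcase1 hcase2
        have hBA : ∀ a : Fin (n+1), a ≠ Fin.last n → B a = A a := by
          intro a ha
          rcases lt_or_ge a r with h | h
          · exact le_antisymm (hcase2 a h) (Finsupp.le_def.mp hAB a)
          · have han : (a : ℕ) + 1 ≤ n := by
              have : a < Fin.last n := Fin.lt_last_iff_ne_last.mpr ha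
              have := Fin.lt_def.mp this
              simp only [Fin.val_last] at this
              omega
            exact le_antisymm (hcase1 a (Fin.le_def.mp h) han) (Finsupp.le_def.mp hAB a)
        refine hB (B (Fin.last n)) ?_
        ext a
        rcases eq_or_ne a (Fin.last n) with rfl | ha
        · simp [Finsupp.add_apply, Finsupp.single_apply, hAlast]
        · simp only [Finsupp.add_apply, Finsupp.single_apply,
            if_neg (fun hc : Fin.last n = a => ha hc.symm), add_zero]
          exact hBA a ha
  · exact ⟨C, Or.inl ⟨hCmin, by simpa using hCA⟩, hCle⟩

theorem mdeg_add (A C : Fin (n+1) →₀ ℕ) : mdeg (A + C) = mdeg A + mdeg C := by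
  simp [mdeg, Finsupp.add_apply, Finset.sum_add_distrib]

theorem mdeg_single (a : Fin (n+1)) (k : ℕ) : mdeg (Finsupp.single a k) = k := by
  simp [mdeg, Finsupp.single_apply]

end

/-- the Hilbert function of an expansion: it agrees with that of `I`
below `deg x^A` and exceeds it by exactly `1` from `deg x^A` on. -/
theorem hilbF_expansion
    {K : Type*} [Field K] {n : ℕ} (hn : 2 ≤ n) (I : Ideal (PR K n))
    (hmono : IsMonomialIdeal I) (hss : StronglyStable I) (hsat : Saturated I)
    (A : Fin (n+1) →₀ ℕ) (hA : Expandable I A) (j : ℕ) :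
    hilbF (expansionIdeal I A) j =
      if j < mdeg A then hilbF I j else hilbF I j + 1 := by
  classical
  obtain ⟨hA0, hAmin, -⟩ := hA
  have hexp_mono : IsMonomialIdeal (expansionIdeal I A) := ⟨_, rfl⟩
  have hsupI := monIdeal_support hmono
  have hsupE := monIdeal_support hexp_mono
  have hEI : expansionIdeal I A ≤ I := expansion_le hAmin.1
  rw [hilbF_eq_card I hsupI j, hilbF_eq_card _ hsupE j]
  by_cases hj : j < mdeg A
  · rw [if_pos hj]
    congr 1
    apply Finset.ext
    intro B
    rw [mem_TT, mem_TT]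
    constructor
    · rintro ⟨hd, hBE⟩
      refine ⟨hd, fun hBI => hBE ?_⟩
      refine key_c hss hsat hA0 hAmin hBI ?_
      intro k hk
      have hmd := congrArg mdeg hk
      rw [mdeg_add, mdeg_single] at hmd
      omega
    · rintro ⟨hd, hBI⟩
      exact ⟨hd, fun h => hBI (hEI h)⟩
  · rw [if_neg hj]
    push_neg at hj
    set B0 := A + Finsupp.single (Fin.last n) (j - mdeg A) with hB0
    have hB0d : mdeg B0 = j := by rw [hB0, mdeg_add, mdeg_single]; omega
    have hAleB0 : A ≤ B0 := Finsupp.le_def.mpr fun a => by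
      simp only [hB0, Finsupp.add_apply]; exact Nat.le_add_right _ _
    have hB0I : (mon B0 : PR K n) ∈ I := mon_mem_of_le hAleB0 hAmin.1
    have hB0E : (mon B0 : PR K n) ∉ expansionIdeal I A := key_b hss hsat hAmin _
    have hset : TT (expansionIdeal I A) j = insert B0 (TT I j) := by
      apply Finset.ext; intro B
      rw [Finset.mem_insert, mem_TT, mem_TT]
      constructor
      · rintro ⟨hd, hBE⟩
        by_cases hBI : (mon B : PR K n) ∈ I
        · left
          by_contra hne
          apply hBE
          refine key_c hss hsat hA0 hAmin hBI ?_
          intro k hk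
          have hmd := congrArg mdeg hk
          rw [mdeg_add, mdeg_single] at hmd
          have hkval : k = j - mdeg A := by omega
          exact hne (by rw [hk, hkval])
        · right; exact ⟨hd, hBI⟩
      · rintro (rfl | ⟨hd, hBI⟩)
        · exact ⟨hB0d, hB0E⟩
        · exact ⟨hd, fun h => hBI (hEI h)⟩
    rw [hset, Finset.card_insert_of_notMem (fun hmem => (mem_TT.mp hmem).2 hB0I)]
end
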